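/- For every complex z with |z| < π/2 and real m₁ ∈ [0,1], with u = |z|: sn(u, m₁)/cn(u, m₁) ≤ tan u, 1/cn(u, m₁) ≤ 1/cos u, and dn(u, m₁)/cn(u, m₁) ≤ 1/cos u, where sn, cn, dn have parameter m₁ and 0 ≤ u < π/2. -/

import Mathlib

noncomputable section

/-- The incomplete elliptic integral of the first kind (in Jacobi form). -/
def ellF (m x : ℝ) : ℝ := ∫ t in (0:ℝ)..x, 1 / Real.sqrt ((1 - t ^ 2) * (1 - m * t ^ 2))

/-- The Jacobi elliptic function `sn(u, m)`, the inverse of `x ↦ ellF m x`. -/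
def sn (u m : ℝ) : ℝ := Function.invFun (ellF m) u

/-- The Jacobi elliptic function `cn(u, m) = √(1 - sn(u,m)²)`. -/
def cn (u m : ℝ) : ℝ := Real.sqrt (1 - sn u m ^ 2)

/-- The Jacobi elliptic function `dn(u, m) = √(1 - m·sn(u,m)²)`. -/
def dn (u m : ℝ) : ℝ := Real.sqrt (1 - m * sn u m ^ 2)

end

open Real Set intervalIntegral

private lemma ell_pos_on {m : ℝ} (hm0 : 0 ≤ m) (hm1 : m ≤ 1) {t : ℝ} (ht : t ^ 2 < 1) :
    0 < (1 - t ^ 2) * (1 - m * t ^ 2) := by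
  have h1 : 0 < 1 - t ^ 2 := by linarith
  have h2 : m * t ^ 2 ≤ t ^ 2 := by nlinarith [sq_nonneg t]
  nlinarith

private lemma ell_contOn {m : ℝ} (hm0 : 0 ≤ m) (hm1 : m ≤ 1) :
    ContinuousOn (fun t : ℝ => 1 / Real.sqrt ((1 - t ^ 2) * (1 - m * t ^ 2)))
      {t : ℝ | t ^ 2 < 1} := by
  apply ContinuousOn.div continuousOn_const
  · exact (Continuous.sqrt (by continuity)).continuousOn
  · intro t ht
    exact (Real.sqrt_pos.mpr (ell_pos_on hm0 hm1 ht)).ne'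

private lemma sub_one {a : ℝ} (ha : a ^ 2 < 1) : Set.uIcc 0 a ⊆ {t : ℝ | t ^ 2 < 1} := by
  intro t ht
  have h1 : |t| ≤ |a| := by
    rcases le_total 0 a with h | h
    · rw [Set.uIcc_of_le h] at ht
      rw [abs_le]
      exact ⟨by linarith [ht.1, abs_nonneg a], le_trans ht.2 (le_abs_self a)⟩
    · rw [Set.uIcc_of_ge h] at ht
      rw [abs_le]
      exact ⟨le_trans (neg_abs_le a) ht.1, by linarith [ht.2, abs_nonneg a]⟩
  have h2 : t ^ 2 ≤ a ^ 2 := by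
    rw [← sq_abs t, ← sq_abs a]
    exact pow_le_pow_left₀ (abs_nonneg t) h1 2
  simpa using lt_of_le_of_lt h2 ha

private lemma ell_intble {m : ℝ} (hm0 : 0 ≤ m) (hm1 : m ≤ 1) {a : ℝ} (ha : a ^ 2 < 1) :
    IntervalIntegrable (fun t : ℝ => 1 / Real.sqrt ((1 - t ^ 2) * (1 - m * t ^ 2)))
      MeasureTheory.volume 0 a :=
  ((ell_contOn hm0 hm1).mono (sub_one ha)).intervalIntegrable

private lemma one_sub_sq_eq {t : ℝ} :
    1 / Real.sqrt (1 - t ^ 2) = 1 / Real.sqrt ((1 - t ^ 2) * (1 - (0:ℝ) * t ^ 2)) := by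
  norm_num

/-- `arcsin a ≤ ellF m a` for `0 ≤ a < 1`, `m ∈ [0,1]`. -/
private lemma arcsin_le_ellF {m : ℝ} (hm0 : 0 ≤ m) (hm1 : m ≤ 1) {a : ℝ}
    (ha0 : 0 ≤ a) (ha1 : a < 1) : Real.arcsin a ≤ ellF m a := by
  have ha2 : a ^ 2 < 1 := by nlinarith
  have hintble0 : IntervalIntegrable (fun t : ℝ => 1 / Real.sqrt (1 - t ^ 2))
      MeasureTheory.volume 0 a := by
    have := ell_intble (le_refl (0:ℝ)) zero_le_one ha2
    simpa using this
  have hint : (∫ t in (0:ℝ)..a, 1 / Real.sqrt (1 - t ^ 2)) = Real.arcsin a := by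
    have hder : ∀ t ∈ Set.uIcc (0:ℝ) a,
        HasDerivAt Real.arcsin (1 / Real.sqrt (1 - t ^ 2)) t := by
      intro t ht
      have ht' := sub_one ha2 ht
      simp only [Set.mem_setOf_eq] at ht'
      have h1 : t ≠ -1 := by intro h; rw [h] at ht'; norm_num at ht'
      have h2 : t ≠ 1 := by intro h; rw [h] at ht'; norm_num at ht'
      exact Real.hasDerivAt_arcsin h1 h2
    have := intervalIntegral.integral_eq_sub_of_hasDerivAt hder hintble0
    rw [this, Real.arcsin_zero, sub_zero]
  rw [← hint, ellF]
  apply intervalIntegral.integral_mono_on ha0 hintble0 (ell_intble hm0 hm1 ha2)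
  intro t ht
  have ht2 : t ^ 2 < 1 := sub_one ha2 (by rw [Set.uIcc_of_le ha0]; exact ht)
  have h1 : 0 < 1 - t ^ 2 := by linarith
  have hprod : (1 - t ^ 2) * (1 - m * t ^ 2) ≤ 1 - t ^ 2 := by
    nlinarith [mul_nonneg h1.le (mul_nonneg hm0 (sq_nonneg t)), sq_nonneg t]
  have hppos : 0 < (1 - t ^ 2) * (1 - m * t ^ 2) := ell_pos_on hm0 hm1 ht2
  exact one_div_le_one_div_of_le (Real.sqrt_pos.mpr hppos) (Real.sqrt_le_sqrt hprod)

/-- For any complex `z` with `|z| < π/2` and `m₁ ∈ [0,1]`, with `u = |z|`: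
`sn(u,m₁)/cn(u,m₁) ≤ tan u`, `1/cn(u,m₁) ≤ 1/cos u`, and `dn(u,m₁)/cn(u,m₁) ≤ 1/cos u`. -/
theorem jacobi_bounds_at_abs (z : ℂ) (hz : ‖z‖ < Real.pi / 2)
    (m₁ : ℝ) (hm₁ : m₁ ∈ Set.Icc (0:ℝ) 1) :
    sn (‖z‖) m₁ / cn (‖z‖) m₁ ≤ Real.tan (‖z‖) ∧
      1 / cn (‖z‖) m₁ ≤ 1 / Real.cos (‖z‖) ∧
      dn (‖z‖) m₁ / cn (‖z‖) m₁ ≤ 1 / Real.cos (‖z‖) := by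
  obtain ⟨hm0, hm1⟩ := hm₁
  set u := ‖z‖ with hu
  have hu0 : 0 ≤ u := norm_nonneg z
  have hcos : 0 < Real.cos u :=
    Real.cos_pos_of_mem_Ioo ⟨by linarith [Real.pi_pos], hz⟩
  have htan : 0 ≤ Real.tan u := Real.tan_nonneg_of_nonneg_of_le_pi_div_two hu0 hz.le
  -- existence of a preimage of u under ellF m₁
  have hex : ∃ x, ellF m₁ x = u := by
    set v := (u + Real.pi / 2) / 2 with hv
    have hv1 : u < v := by rw [hv]; linarith
    have hv2 : v < Real.pi / 2 := by rw [hv]; linarith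
    have hv0 : 0 ≤ v := by positivity
    set b := Real.sin v with hb
    have hb0 : 0 ≤ b := Real.sin_nonneg_of_nonneg_of_le_pi hv0 (by linarith [Real.pi_pos])
    have hb1 : b < 1 := by
      have := Real.sin_lt_sin_of_lt_of_le_pi_div_two
        (x := v) (y := Real.pi / 2) (by linarith [Real.pi_pos]) le_rfl hv2
      rwa [Real.sin_pi_div_two] at this
    have hb2 : b ^ 2 < 1 := by nlinarith
    have harcsin : Real.arcsin b = v := Real.arcsin_sin (by linarith [Real.pi_pos]) hv2.le
    have hF : u ≤ ellF m₁ b := by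
      have h := arcsin_le_ellF hm0 hm1 hb0 hb1
      rw [harcsin] at h; linarith
    have hcont : ContinuousOn (fun x => ellF m₁ x) (Set.Icc 0 b) := by
      have h := intervalIntegral.continuousOn_primitive_interval'
        (μ := MeasureTheory.volume) (a := (0:ℝ)) (b₁ := (0:ℝ)) (b₂ := b)
        (ell_intble hm0 hm1 hb2) Set.left_mem_uIcc
      rwa [Set.uIcc_of_le hb0] at h
    have h0 : ellF m₁ 0 = 0 := intervalIntegral.integral_same
    have := intermediate_value_Icc hb0 hcont
    have hmem : u ∈ Set.Icc (ellF m₁ 0) (ellF m₁ b) := by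
      rw [h0]; exact ⟨hu0, hF⟩
    obtain ⟨x, _, hx⟩ := this hmem
    exact ⟨x, hx⟩
  have hsn : ellF m₁ (sn u m₁) = u := Function.invFun_eq hex
  set a := sn u m₁ with ha
  by_cases hcrit : 1 ≤ a ^ 2
  · -- degenerate case: cn = 0 and everything divides to 0
    have hcn0 : cn u m₁ = 0 := by
      rw [cn, Real.sqrt_eq_zero', ← ha]
      linarith
    rw [hcn0]
    refine ⟨by simpa [div_zero] using htan, ?_, ?_⟩
    · simp only [div_zero]; positivity
    · simp only [div_zero]; positivity
  · push_neg at hcrit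
    have ha1 : a < 1 := by nlinarith
    have ham1 : -1 < a := by nlinarith
    -- a ≥ 0
    have ha0 : 0 ≤ a := by
      by_contra h
      push_neg at h
      have hpos : 0 < ∫ t in a..(0:ℝ),
          1 / Real.sqrt ((1 - t ^ 2) * (1 - m₁ * t ^ 2)) := by
        apply intervalIntegral.intervalIntegral_pos_of_pos_on
        · exact ((ell_intble hm0 hm1 hcrit).symm)
        · intro t ht
          have ht2 : t ^ 2 < 1 := sub_one hcrit (by
            rw [Set.uIcc_of_ge h.le]
            exact ⟨ht.1.le, ht.2.le⟩)
          exact div_pos one_pos (Real.sqrt_pos.mpr (ell_pos_on hm0 hm1 ht2))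
        · exact h
      have : ellF m₁ a < 0 := by
        rw [ellF, intervalIntegral.integral_symm a 0]
        linarith
      rw [hsn] at this
      linarith
    -- a ≤ sin u
    have hkey : a ≤ Real.sin u := by
      have h1 : Real.arcsin a ≤ u := by
        have := arcsin_le_ellF hm0 hm1 ha0 ha1
        rw [hsn] at this; exact this
      have h2 : Real.sin (Real.arcsin a) ≤ Real.sin u := by
        rcases eq_or_lt_of_le h1 with h | h
        · rw [h]
        · exact (Real.sin_lt_sin_of_lt_of_le_pi_div_two
            (Real.arcsin_mem_Icc a).1 hz.le h).le
      rwa [Real.sin_arcsin (by linarith) (by linarith)] at h2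
    have hsinu : 0 ≤ Real.sin u := ha0.trans hkey
    have hcn_ge : Real.cos u ≤ cn u m₁ := by
      rw [cn, ← ha]
      have h1 : Real.sin u ^ 2 ≤ 1 → True := fun _ => trivial
      have h2 : 1 - Real.sin u ^ 2 ≤ 1 - a ^ 2 := by
        have := pow_le_pow_left₀ ha0 hkey 2
        linarith
      calc Real.cos u = Real.sqrt (Real.cos u ^ 2) := (Real.sqrt_sq hcos.le).symm
        _ = Real.sqrt (1 - Real.sin u ^ 2) := by
              rw [← Real.sin_sq_add_cos_sq u]; ring_nf
        _ ≤ Real.sqrt (1 - a ^ 2) := Real.sqrt_le_sqrt h2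
    have hcnpos : 0 < cn u m₁ := lt_of_lt_of_le hcos hcn_ge
    have hdn_le : dn u m₁ ≤ 1 := by
      rw [dn, ← ha]
      calc Real.sqrt (1 - m₁ * a ^ 2) ≤ Real.sqrt 1 :=
            Real.sqrt_le_sqrt (by nlinarith [mul_nonneg hm0 (sq_nonneg a)])
        _ = 1 := Real.sqrt_one
    refine ⟨?_, ?_, ?_⟩
    · rw [Real.tan_eq_sin_div_cos]
      exact div_le_div₀ hsinu hkey hcos hcn_ge
    · exact one_div_le_one_div_of_le hcos hcn_ge
    · exact div_le_div₀ zero_le_one hdn_le hcos hcn_ge
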